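/- The radial vector field R a(x) = ⟨x, ∇a(x)⟩ satisfies, for a ∈ 𝒮(ℝ^d) and g ∈ 𝒮(ℝ^d), the intertwining relation 𝒯_g(Ra)(x,ξ) = ⟨x + i∇_ξ, ∇_x⟩ 𝒯_g a(x,ξ), i.e. 𝒯_g(Ra)(x,ξ) = Σ_{j=1}^d (x_j ∂_{x_j} + i ∂_{ξ_j} ∂_{x_j}) 𝒯_g a(x,ξ). -/

import Mathlib

noncomputable section
open MeasureTheory Complex
open scoped RealInnerProductSpace BigOperators

/-- `ℝ^d` with the Euclidean structure. -/
abbrev E (d : ℕ) := EuclideanSpace ℝ (Fin d)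

/-- The FBI-type transform `𝒯_g u`. -/
def Tg (d : ℕ) (g u : E d → ℂ) (x ξ : E d) : ℂ :=
  (((2 * Real.pi) ^ (-(d : ℝ) / 2) : ℝ) : ℂ) *
    ∫ y : E d, u y * Complex.exp (-Complex.I * ((⟪y - x, ξ⟫ : ℝ) : ℂ)) *
      (starRingEnd ℂ) (g (y - x))

/-- Partial derivative in the `i`-th coordinate direction. -/
def pd (d : ℕ) (i : Fin d) (f : E d → ℂ) : E d → ℂ :=
  fun x => fderiv ℝ f x (EuclideanSpace.single i 1)

/-- Iterated partial derivatives along a list of coordinate indices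
(a multi-index `∂^α`). -/
def pdL (d : ℕ) (L : List (Fin d)) (f : E d → ℂ) : E d → ℂ :=
  L.foldr (pd d) f

/-- Japanese bracket `⟨x⟩ = (1+|x|²)^{1/2}`. -/
def jbr {d : ℕ} (x : E d) : ℝ := Real.sqrt (1 + ‖x‖ ^ 2)

open Metric

namespace TgAux

variable {d : ℕ}

/-- the complex exponential kernel -/
def ek (z ξ : E d) : ℂ := Complex.exp (-Complex.I * ((⟪z, ξ⟫ : ℝ) : ℂ))

lemma norm_ek (z ξ : E d) : ‖ek z ξ‖ = 1 := by
  rw [ek, Complex.norm_exp]; simp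

lemma continuous_ek_left (ξ : E d) : Continuous fun z : E d => ek z ξ := by
  exact Complex.continuous_exp.comp
    (continuous_const.mul (Complex.continuous_ofReal.comp (continuous_id.inner continuous_const)))

lemma Tg_shift (g u : E d → ℂ) (x ξ : E d) :
    Tg d g u x ξ = (((2 * Real.pi) ^ (-(d : ℝ) / 2) : ℝ) : ℂ) *
      ∫ z : E d, u (z + x) * ek z ξ * (starRingEnd ℂ) (g z) := by
  unfold Tg
  congr 1
  rw [← integral_add_right_eq_self
    (fun y => u y * Complex.exp (-Complex.I * ((⟪y - x, ξ⟫ : ℝ) : ℂ)) * (starRingEnd ℂ) (g (y - x))) x]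
  simp [ek, add_sub_cancel_right]

lemma integrable_aux (g : SchwartzMap (E d) ℂ) (p : E d → ℂ) (hp : Continuous p)
    (M : ℝ) (hM : ∀ z, ‖p z‖ ≤ M + M * ‖z‖) (ξ : E d) :
    Integrable (fun z : E d => p z * ek z ξ * (starRingEnd ℂ) (g z)) := by
  have hb : Integrable (fun z : E d => M * ‖g z‖ + M * (‖z‖ ^ 1 * ‖g z‖)) :=
    ((g.integrable (μ := volume)).norm.const_mul M).add
      ((g.integrable_pow_mul volume 1).const_mul M)
  refine hb.mono' ?_ ?_
  · exact (((hp.mul (continuous_ek_left ξ)).mul (continuous_star.comp g.continuous))).aestronglyMeasurable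
  · filter_upwards with z
    have : ‖p z * ek z ξ * (starRingEnd ℂ) (g z)‖ = ‖p z‖ * ‖g z‖ := by
      rw [norm_mul, norm_mul, norm_ek]; simp
    rw [this]
    have h2 : ‖p z‖ * ‖g z‖ ≤ (M + M * ‖z‖) * ‖g z‖ :=
      mul_le_mul_of_nonneg_right (hM z) (norm_nonneg _)
    calc ‖p z‖ * ‖g z‖ ≤ (M + M * ‖z‖) * ‖g z‖ := h2
      _ = M * ‖g z‖ + M * (‖z‖ ^ 1 * ‖g z‖) := by ring


lemma schwartz_bound (f : SchwartzMap (E d) ℂ) : ∃ M : ℝ, 0 < M ∧ ∀ y, ‖f y‖ ≤ M := by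
  obtain ⟨C, hC⟩ := f.decay 0 0
  exact ⟨C, hC.1, fun y => by simpa [norm_iteratedFDeriv_zero] using hC.2 y⟩

lemma schwartz_fderiv_bound (f : SchwartzMap (E d) ℂ) :
    ∃ M : ℝ, 0 < M ∧ ∀ y, ‖fderiv ℝ f y‖ ≤ M := by
  obtain ⟨C, hC⟩ := (SchwartzMap.fderivCLM (𝕜 := ℝ) (E := E d) (F := ℂ) f).decay 0 0
  refine ⟨C, hC.1, fun y => ?_⟩
  have := hC.2 y
  simpa [norm_iteratedFDeriv_zero, SchwartzMap.fderivCLM_apply] using this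

lemma continuous_fderiv_shift (a : SchwartzMap (E d) ℂ) (x : E d) :
    Continuous fun z : E d => fderiv ℝ a (z + x) :=
  ((a.smooth 1).continuous_fderiv (by simp)).comp (continuous_id.add continuous_const)

lemma hasFDerivAt_shift (a : SchwartzMap (E d) ℂ) (z x' : E d) :
    HasFDerivAt (fun x'' : E d => a (z + x'')) (fderiv ℝ a (z + x')) x' := by
  have h1 : HasFDerivAt a (fderiv ℝ a (z + x')) (z + x') :=
    (a.differentiable.differentiableAt).hasFDerivAt
  have h2 : HasFDerivAt (fun x'' : E d => z + x'') (ContinuousLinearMap.id ℝ (E d)) x' :=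
    (hasFDerivAt_id x').const_add z
  simpa [Function.comp_def] using h1.comp x' h2

lemma integrable_F'x (a g : SchwartzMap (E d) ℂ) (x ξ : E d) :
    Integrable (fun z : E d =>
      (starRingEnd ℂ) (g z) • (ek z ξ • fderiv ℝ a (z + x))) := by
  obtain ⟨M, hM0, hM⟩ := schwartz_fderiv_bound a
  have hb : Integrable (fun z : E d => M * ‖g z‖) := (g.integrable (μ := volume)).norm.const_mul M
  refine hb.mono' ?_ ?_
  · exact ((continuous_star.comp g.continuous).smul
      ((continuous_ek_left ξ).smul (continuous_fderiv_shift a x))).aestronglyMeasurable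
  · filter_upwards with z
    have h1 : ‖fderiv ℝ (⇑a) (z + x)‖ ≤ M := hM _
    have he : ‖(starRingEnd ℂ) (g z) • ek z ξ • fderiv ℝ (⇑a) (z + x)‖
        = ‖g z‖ * ‖fderiv ℝ (⇑a) (z + x)‖ := by
      rw [norm_smul ((starRingEnd ℂ) (g z)) (ek z ξ • fderiv ℝ (⇑a) (z + x)),
        norm_smul (ek z ξ) (fderiv ℝ (⇑a) (z + x)), norm_ek, one_mul, RCLike.norm_conj]
    rw [he, mul_comm]
    exact mul_le_mul_of_nonneg_right h1 (norm_nonneg _)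

lemma hasFDerivAt_x (a g : SchwartzMap (E d) ℂ) (x ξ : E d) :
    HasFDerivAt (fun x' : E d => ∫ z : E d, a (z + x') * ek z ξ * (starRingEnd ℂ) (g z))
      (∫ z : E d, (starRingEnd ℂ) (g z) • (ek z ξ • fderiv ℝ a (z + x))) x := by
  obtain ⟨M, hM0, hM⟩ := schwartz_fderiv_bound a
  obtain ⟨Ma, hMa0, hMa⟩ := schwartz_bound a
  apply hasFDerivAt_integral_of_dominated_of_fderiv_le (Metric.ball_mem_nhds _ one_pos)
    (F' := fun x' z => (starRingEnd ℂ) (g z) • (ek z ξ • fderiv ℝ (⇑a) (z + x')))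
    (bound := fun z => M * ‖g z‖)
  · filter_upwards with x'
    exact (integrable_aux g (fun z => a (z + x'))
      (a.continuous.comp (continuous_id.add continuous_const)) Ma
      (fun z => le_add_of_le_of_nonneg (hMa _) (by positivity)) ξ).aestronglyMeasurable
  · exact integrable_aux g (fun z => a (z + x))
      (a.continuous.comp (continuous_id.add continuous_const)) Ma
      (fun z => le_add_of_le_of_nonneg (hMa _) (by positivity)) ξ
  · exact (integrable_F'x a g x ξ).aestronglyMeasurable
  · filter_upwards with z x' _
    have he : ‖(starRingEnd ℂ) (g z) • ek z ξ • fderiv ℝ (⇑a) (z + x')‖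
        = ‖g z‖ * ‖fderiv ℝ (⇑a) (z + x')‖ := by
      rw [norm_smul ((starRingEnd ℂ) (g z)) (ek z ξ • fderiv ℝ (⇑a) (z + x')),
        norm_smul (ek z ξ) (fderiv ℝ (⇑a) (z + x')), norm_ek, one_mul, RCLike.norm_conj]
    rw [he, mul_comm]
    exact mul_le_mul_of_nonneg_right (hM _) (norm_nonneg _)
  · exact (g.integrable (μ := volume)).norm.const_mul M
  · filter_upwards with z x' _
    exact ((hasFDerivAt_shift a z x').mul_const (ek z ξ)).mul_const ((starRingEnd ℂ) (g z))


lemma pd_Tg_x (a g : SchwartzMap (E d) ℂ) (j : Fin d) (x ξ : E d) :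
    pd d j (fun x' => Tg d g a x' ξ) x
      = (((2 * Real.pi) ^ (-(d : ℝ) / 2) : ℝ) : ℂ) *
        ∫ z : E d, fderiv ℝ (⇑a) (z + x) (EuclideanSpace.single j 1) * ek z ξ *
          (starRingEnd ℂ) (g z) := by
  have heq : (fun x' => Tg d g a x' ξ)
      = fun x' => (((2 * Real.pi) ^ (-(d : ℝ) / 2) : ℝ) : ℂ) *
        ∫ z : E d, a (z + x') * ek z ξ * (starRingEnd ℂ) (g z) := by
    funext x'; exact Tg_shift g a x' ξ
  have hD := (hasFDerivAt_x a g x ξ).const_mul ((((2 * Real.pi) ^ (-(d : ℝ) / 2) : ℝ) : ℂ))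
  simp only [pd, heq]
  rw [hD.fderiv, ContinuousLinearMap.smul_apply,
    ContinuousLinearMap.integral_apply (integrable_F'x a g x ξ), smul_eq_mul]
  congr 1
  refine integral_congr_ae (Filter.Eventually.of_forall fun z => ?_)
  simp only [ContinuousLinearMap.smul_apply, smul_eq_mul]
  ring


def Lz (z : E d) : E d →L[ℝ] ℂ := (-Complex.I) • (Complex.ofRealCLM.comp (innerSL ℝ z))

lemma Lz_apply (z v : E d) : Lz z v = -Complex.I * ((⟪z, v⟫ : ℝ) : ℂ) := by
  simp [Lz]

lemma norm_Lz_le (z : E d) : ‖Lz z‖ ≤ ‖z‖ := by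
  apply ContinuousLinearMap.opNorm_le_bound _ (norm_nonneg z)
  intro v
  rw [Lz_apply, norm_mul]
  have h1 : ‖-Complex.I‖ = 1 := by simp
  have h2 : ‖((⟪z, v⟫ : ℝ) : ℂ)‖ = |(⟪z, v⟫ : ℝ)| := by
    rw [Complex.norm_real]; exact Real.norm_eq_abs _
  rw [h1, h2, one_mul]
  exact abs_real_inner_le_norm z v

lemma continuous_Lz : Continuous fun z : E d => Lz z := by
  have h : Continuous fun z : E d => Complex.ofRealCLM.comp (innerSL ℝ z) :=
    (ContinuousLinearMap.compL ℝ (E d) ℝ ℂ Complex.ofRealCLM).continuous.comp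
      (innerSL ℝ).continuous
  exact h.const_smul (-Complex.I)

lemma hasFDerivAt_ek (z ξ : E d) :
    HasFDerivAt (fun ξ' : E d => ek z ξ') (ek z ξ • Lz z) ξ := by
  have h0 : (fun ξ' : E d => -Complex.I * ((⟪z, ξ'⟫ : ℝ) : ℂ)) = Lz z := by
    funext v; rw [Lz_apply]
  have h1 : HasFDerivAt (fun ξ' : E d => -Complex.I * ((⟪z, ξ'⟫ : ℝ) : ℂ)) (Lz z) ξ := by
    rw [h0]; exact (Lz z).hasFDerivAt
  have h2 := h1.cexp
  simpa [ek] using h2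

lemma norm_F'xi (g : SchwartzMap (E d) ℂ) (p : E d → ℂ) (z ξ : E d) :
    ‖(starRingEnd ℂ) (g z) • (p z • (ek z ξ • Lz z))‖ = ‖g z‖ * (‖p z‖ * ‖Lz z‖) := by
  rw [norm_smul ((starRingEnd ℂ) (g z)) (p z • (ek z ξ • Lz z)),
    norm_smul (p z) (ek z ξ • Lz z), norm_smul (ek z ξ) (Lz z), norm_ek, one_mul,
    RCLike.norm_conj]

lemma integrable_F'xi (g : SchwartzMap (E d) ℂ) (p : E d → ℂ) (hp : Continuous p)
    (M : ℝ) (hM : ∀ z, ‖p z‖ ≤ M) (ξ : E d) :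
    Integrable (fun z : E d => (starRingEnd ℂ) (g z) • (p z • (ek z ξ • Lz z))) := by
  have hb : Integrable (fun z : E d => M * (‖z‖ ^ 1 * ‖g z‖)) :=
    (g.integrable_pow_mul volume 1).const_mul M
  refine hb.mono' ?_ ?_
  · exact ((continuous_star.comp g.continuous).smul
      (hp.smul ((continuous_ek_left ξ).smul continuous_Lz))).aestronglyMeasurable
  · filter_upwards with z
    rw [norm_F'xi]
    have h1 := hM z
    have h2 := norm_Lz_le z
    have n1 := norm_nonneg (g z); have n2 := norm_nonneg (p z)
    have n3 := norm_nonneg (Lz z)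
    have hM0' := (norm_nonneg (p z)).trans h1
    calc ‖g z‖ * (‖p z‖ * ‖Lz z‖) ≤ ‖g z‖ * (M * ‖z‖) :=
          mul_le_mul_of_nonneg_left (mul_le_mul h1 h2 n3 hM0') n1
      _ = M * (‖z‖ ^ 1 * ‖g z‖) := by ring

lemma hasFDerivAt_xi (g : SchwartzMap (E d) ℂ) (p : E d → ℂ) (hp : Continuous p)
    (M : ℝ) (hM0 : 0 ≤ M) (hM : ∀ z, ‖p z‖ ≤ M) (ξ : E d) :
    HasFDerivAt (fun ξ' : E d => ∫ z : E d, p z * ek z ξ' * (starRingEnd ℂ) (g z))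
      (∫ z : E d, (starRingEnd ℂ) (g z) • (p z • (ek z ξ • Lz z))) ξ := by
  have hMz : ∀ z : E d, ‖p z‖ ≤ M + M * ‖z‖ := fun z =>
    le_add_of_le_of_nonneg (hM z) (mul_nonneg hM0 (norm_nonneg z))
  apply hasFDerivAt_integral_of_dominated_of_fderiv_le (Metric.ball_mem_nhds _ one_pos)
    (F' := fun ξ' z => (starRingEnd ℂ) (g z) • (p z • (ek z ξ' • Lz z)))
    (bound := fun z => M * (‖z‖ ^ 1 * ‖g z‖))
  · filter_upwards with ξ'
    exact (integrable_aux g p hp M hMz ξ').aestronglyMeasurable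
  · exact integrable_aux g p hp M hMz ξ
  · exact (integrable_F'xi g p hp M hM ξ).aestronglyMeasurable
  · filter_upwards with z ξ' _
    rw [norm_F'xi]
    have h1 := hM z
    have h2 := norm_Lz_le z
    have n1 := norm_nonneg (g z)
    have n3 := norm_nonneg (Lz z)
    calc ‖g z‖ * (‖p z‖ * ‖Lz z‖) ≤ ‖g z‖ * (M * ‖z‖) :=
          mul_le_mul_of_nonneg_left (mul_le_mul h1 h2 n3 hM0) n1
      _ = M * (‖z‖ ^ 1 * ‖g z‖) := by ring
  · exact (g.integrable_pow_mul volume 1).const_mul M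
  · filter_upwards with z ξ' _
    exact ((hasFDerivAt_ek z ξ').const_mul (p z)).mul_const ((starRingEnd ℂ) (g z))

lemma pd_xi (g : SchwartzMap (E d) ℂ) (p : E d → ℂ) (hp : Continuous p)
    (M : ℝ) (hM0 : 0 ≤ M) (hM : ∀ z, ‖p z‖ ≤ M) (j : Fin d) (ξ : E d) :
    pd d j (fun ξ' => (((2 * Real.pi) ^ (-(d : ℝ) / 2) : ℝ) : ℂ) *
        ∫ z : E d, p z * ek z ξ' * (starRingEnd ℂ) (g z)) ξ
      = (((2 * Real.pi) ^ (-(d : ℝ) / 2) : ℝ) : ℂ) *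
        ∫ z : E d, -Complex.I * ((z j : ℝ) : ℂ) * p z * ek z ξ * (starRingEnd ℂ) (g z) := by
  have hD := (hasFDerivAt_xi g p hp M hM0 hM ξ).const_mul
    ((((2 * Real.pi) ^ (-(d : ℝ) / 2) : ℝ) : ℂ))
  simp only [pd]
  rw [hD.fderiv, ContinuousLinearMap.smul_apply,
    ContinuousLinearMap.integral_apply (integrable_F'xi g p hp M hM ξ), smul_eq_mul]
  congr 1
  refine integral_congr_ae (Filter.Eventually.of_forall fun z => ?_)
  simp only [ContinuousLinearMap.smul_apply, smul_eq_mul, Lz_apply]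
  have : (⟪z, EuclideanSpace.single j (1 : ℝ)⟫ : ℝ) = z j := by
    simp [EuclideanSpace.inner_single_right]
  rw [this]
  ring


lemma coord_abs_le_norm (z : E d) (j : Fin d) : |z j| ≤ ‖z‖ := by
  have h : (⟪z, EuclideanSpace.single j (1 : ℝ)⟫ : ℝ) = z j := by
    simp [EuclideanSpace.inner_single_right]
  calc |z j| = |(⟪z, EuclideanSpace.single j (1 : ℝ)⟫ : ℝ)| := by rw [h]
    _ ≤ ‖z‖ * ‖EuclideanSpace.single j (1 : ℝ)‖ := abs_real_inner_le_norm _ _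
    _ = ‖z‖ := by rw [EuclideanSpace.norm_single]; simp

end TgAux

open TgAux

theorem Tg_radial_vector_field (d : ℕ) (a g : SchwartzMap (E d) ℂ) (x ξ : E d) :
    Tg d g (fun y => ∑ j : Fin d, ((y j : ℝ) : ℂ) * pd d j a y) x ξ =
      ∑ j : Fin d,
        (((x j : ℝ) : ℂ) * pd d j (fun x' => Tg d g a x' ξ) x +
          Complex.I * pd d j (fun ξ' => pd d j (fun x' => Tg d g a x' ξ') x) ξ) := by
  obtain ⟨Mf, hMf0, hMf⟩ := schwartz_fderiv_bound a
  set c : ℂ := (((2 * Real.pi) ^ (-(d : ℝ) / 2) : ℝ) : ℂ) with hc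
  set D : Fin d → E d → ℂ :=
    fun j z => fderiv ℝ (⇑a) (z + x) (EuclideanSpace.single j 1) with hD
  have hDcont : ∀ j : Fin d, Continuous (D j) := fun j =>
    (continuous_fderiv_shift a x).clm_apply continuous_const
  have hDb : ∀ (j : Fin d) (z : E d), ‖D j z‖ ≤ Mf := by
    intro j z
    calc ‖D j z‖ ≤ ‖fderiv ℝ (⇑a) (z + x)‖ * ‖EuclideanSpace.single j (1 : ℝ)‖ :=
          (fderiv ℝ (⇑a) (z + x)).le_opNorm _
      _ = ‖fderiv ℝ (⇑a) (z + x)‖ := by rw [EuclideanSpace.norm_single]; simp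
      _ ≤ Mf := hMf _
  have hcoordC : ∀ j : Fin d, Continuous fun z : E d => ((z j : ℝ) : ℂ) := fun j =>
    Complex.continuous_ofReal.comp ((EuclideanSpace.proj j : E d →L[ℝ] ℝ).continuous)
  -- integrability of the two families
  have hint2 : ∀ j : Fin d,
      Integrable (fun z : E d => ((z j : ℝ) : ℂ) * D j z * ek z ξ * (starRingEnd ℂ) (g z)) := by
    intro j
    refine integrable_aux g (fun z => ((z j : ℝ) : ℂ) * D j z)
      ((hcoordC j).mul (hDcont j)) Mf (fun z => ?_) ξ
    rw [norm_mul]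
    have h1 : ‖((z j : ℝ) : ℂ)‖ ≤ ‖z‖ := by
      rw [Complex.norm_real, Real.norm_eq_abs]; exact coord_abs_le_norm z j
    calc ‖((z j : ℝ) : ℂ)‖ * ‖D j z‖ ≤ ‖z‖ * Mf :=
          mul_le_mul h1 (hDb j z) (norm_nonneg _) (norm_nonneg _)
      _ ≤ Mf + Mf * ‖z‖ := by nlinarith
  have hint1 : ∀ j : Fin d,
      Integrable (fun z : E d => ((x j : ℝ) : ℂ) * D j z * ek z ξ * (starRingEnd ℂ) (g z)) := by
    intro j
    refine integrable_aux g (fun z => ((x j : ℝ) : ℂ) * D j z)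
      (continuous_const.mul (hDcont j)) (Mf * (1 + ‖x‖)) (fun z => ?_) ξ
    rw [norm_mul]
    have h1 : ‖((x j : ℝ) : ℂ)‖ ≤ ‖x‖ := by
      rw [Complex.norm_real, Real.norm_eq_abs]; exact coord_abs_le_norm x j
    have h2 := hDb j z
    have n2 := norm_nonneg (D j z)
    have n3 := norm_nonneg x
    calc ‖((x j : ℝ) : ℂ)‖ * ‖D j z‖ ≤ ‖x‖ * Mf :=
          mul_le_mul h1 h2 n2 n3
      _ ≤ Mf * (1 + ‖x‖) := by nlinarith
      _ ≤ Mf * (1 + ‖x‖) + Mf * (1 + ‖x‖) * ‖z‖ := le_add_of_nonneg_right (by positivity)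
  -- rewrite LHS
  rw [Tg_shift]
  have hL : (fun z : E d =>
        (∑ j : Fin d, (((z + x) j : ℝ) : ℂ) * pd d j a (z + x)) * ek z ξ *
          (starRingEnd ℂ) (g (z)))
      = fun z : E d => ∑ j : Fin d,
          (((x j : ℝ) : ℂ) * D j z * ek z ξ * (starRingEnd ℂ) (g z) +
           ((z j : ℝ) : ℂ) * D j z * ek z ξ * (starRingEnd ℂ) (g z)) := by
    funext z
    rw [Finset.sum_mul, Finset.sum_mul]
    refine Finset.sum_congr rfl fun j _ => ?_
    have hadd : (z + x) j = z j + x j := rfl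
    simp only [pd, hD, hadd]
    push_cast
    ring
  rw [hL, integral_finset_sum (f := fun (j : Fin d) (z : E d) =>
      ((x j : ℝ) : ℂ) * D j z * ek z ξ * (starRingEnd ℂ) (g z) +
      ((z j : ℝ) : ℂ) * D j z * ek z ξ * (starRingEnd ℂ) (g z))
      Finset.univ (fun j _ => (hint1 j).add (hint2 j)), Finset.mul_sum]
  refine Finset.sum_congr rfl fun j _ => ?_
  rw [integral_add (hint1 j) (hint2 j), mul_add]
  congr 1
  · -- x_j term
    rw [pd_Tg_x a g j x ξ, ← hc]
    have e1 : ∫ z : E d, ((x j : ℝ) : ℂ) * D j z * ek z ξ * (starRingEnd ℂ) (g z)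
        = ((x j : ℝ) : ℂ) * ∫ z : E d, D j z * ek z ξ * (starRingEnd ℂ) (g z) := by
      rw [← integral_const_mul]
      refine integral_congr_ae (Filter.Eventually.of_forall fun z => ?_)
      ring
    rw [e1]; ring
  · -- I * ξ-derivative term
    have hfun : (fun ξ' => pd d j (fun x' => Tg d g a x' ξ') x)
        = fun ξ' => c * ∫ z : E d, D j z * ek z ξ' * (starRingEnd ℂ) (g z) := by
      funext ξ'; exact pd_Tg_x a g j x ξ'
    rw [hfun, pd_xi g (D j) (hDcont j) Mf (le_of_lt hMf0) (hDb j) j ξ, ← hc]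
    have hII : Complex.I * -Complex.I = 1 := by
      rw [mul_neg, Complex.I_mul_I]; norm_num
    have e2 : ∫ z : E d, ((z j : ℝ) : ℂ) * D j z * ek z ξ * (starRingEnd ℂ) (g z)
        = Complex.I * ∫ z : E d, -Complex.I * ((z j : ℝ) : ℂ) * D j z * ek z ξ *
            (starRingEnd ℂ) (g z) := by
      rw [← integral_const_mul]
      refine integral_congr_ae (Filter.Eventually.of_forall fun z => ?_)
      calc ((z j : ℝ) : ℂ) * D j z * ek z ξ * (starRingEnd ℂ) (g z)
          = (Complex.I * -Complex.I) * (((z j : ℝ) : ℂ) * D j z * ek z ξ *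
              (starRingEnd ℂ) (g z)) := by rw [hII, one_mul]
        _ = Complex.I * (-Complex.I * ((z j : ℝ) : ℂ) * D j z * ek z ξ *
              (starRingEnd ℂ) (g z)) := by ring
    rw [e2]; ring
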